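/- Let X, Y be independent random vectors in [0,∞)^{m+1}, with X having density f_m(x) = exp(-∑ x_i) with respect to Lebesgue measure. Let B be an event independent of X (measurable with respect to a σ-algebra independent of X, with Y measurable with respect to that σ-algebra). Let ε > 0 and let E ⊆ [ε,∞)^{m+1} ∩ {f_m ≥ ε} be Borel with positive Lebesgue measure. Then P({X+Y ∈ E} ∩ B) ≥ ε · λ^{m+1}(E) · P(B ∩ {Y ∈ [0,ε]^{m+1}}). -/
import Mathlib


open MeasureTheory ProbabilityTheory

theorem stmt6 {Ω : Type*} [MeasurableSpace Ω] (P : Measure Ω) [IsProbabilityMeasure P]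
    (m : ℕ) (X Y : Ω → (Fin (m + 1) → ℝ)) (hX : Measurable X) (hY : Measurable Y)
    (hdens : P.map X = (volume : Measure (Fin (m + 1) → ℝ)).withDensity
      (fun x => ENNReal.ofReal (Set.indicator {x : Fin (m + 1) → ℝ | ∀ i, 0 ≤ x i}
        (fun x => Real.exp (-(∑ i, x i))) x)))
    (B : Set Ω) (hB : MeasurableSet B)
    (hindep : IndepFun (fun ω => (B.indicator (fun _ => (1 : ℝ)) ω, Y ω)) X P)
    (ε : ℝ) (hε : 0 < ε) (E : Set (Fin (m + 1) → ℝ)) (hE : MeasurableSet E)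
    (hEsub : E ⊆ {x | ∀ i, ε ≤ x i} ∩ {x | ε ≤ Real.exp (-(∑ i, x i))})
    (hEvol : 0 < volume E) :
    ENNReal.ofReal ε * volume E * P (B ∩ {ω | ∀ i, Y ω i ∈ Set.Icc 0 ε})
      ≤ P ({ω | X ω + Y ω ∈ E} ∩ B) := by
  classical
  set g : (Fin (m + 1) → ℝ) → ENNReal := fun x => ENNReal.ofReal
    (Set.indicator {x : Fin (m + 1) → ℝ | ∀ i, 0 ≤ x i}
      (fun x => Real.exp (-(∑ i, x i))) x) with hg
  set T : Ω → ℝ × (Fin (m + 1) → ℝ) :=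
    fun ω => (B.indicator (fun _ => (1 : ℝ)) ω, Y ω) with hT
  have hTmeas : Measurable T := (measurable_const.indicator hB).prodMk hY
  -- lower bound on the law of X on translated sets
  have hXlow : ∀ y : Fin (m + 1) → ℝ, (∀ i, y i ∈ Set.Icc 0 ε) →
      ENNReal.ofReal ε * volume E ≤ (P.map X) ((fun x => x + y) ⁻¹' E) := by
    intro y hy
    have hA : MeasurableSet ((fun x => x + y) ⁻¹' E) := hE.preimage (measurable_add_const y)
    have hvol : volume ((fun x => x + y) ⁻¹' E) = volume E :=
      measure_preimage_add_right _ y E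
    rw [hdens, withDensity_apply _ hA]
    calc ENNReal.ofReal ε * volume E
        = ∫⁻ _ in (fun x => x + y) ⁻¹' E, ENNReal.ofReal ε := by
          rw [setLIntegral_const, hvol, mul_comm]
      _ ≤ ∫⁻ x in (fun x => x + y) ⁻¹' E, g x := by
          refine setLIntegral_mono' hA ?_
          intro x hx
          have hmem := hEsub hx
          have h1 : ∀ i, ε ≤ (x + y) i := hmem.1
          have h2 : ε ≤ Real.exp (-(∑ i, (x + y) i)) := hmem.2
          have hxnn : ∀ i, 0 ≤ x i := by
            intro i
            have := h1 i
            have hyi := (hy i).2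
            simp only [Pi.add_apply] at this
            linarith
          have hsum : ∑ i, x i ≤ ∑ i, (x + y) i := by
            apply Finset.sum_le_sum
            intro i _
            have := (hy i).1
            simp only [Pi.add_apply]
            linarith
          have : ε ≤ Real.exp (-(∑ i, x i)) := by
            refine h2.trans (Real.exp_le_exp.mpr ?_)
            linarith
          simp only [hg]
          rw [Set.indicator_of_mem (show x ∈ {x : Fin (m+1) → ℝ | ∀ i, 0 ≤ x i} from hxnn)]
          exact ENNReal.ofReal_le_ofReal this
  have hmap : P.map (fun ω => (T ω, X ω)) = (P.map T).prod (P.map X) :=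
    (indepFun_iff_map_prod_eq_prod_map_map hTmeas.aemeasurable hX.aemeasurable).mp hindep
  set G : Set (ℝ × (Fin (m + 1) → ℝ)) :=
    {t | t.1 = 1 ∧ ∀ i, t.2 i ∈ Set.Icc 0 ε} with hGdef
  have hGmeas : MeasurableSet G := by
    have : G = (Prod.fst ⁻¹' {(1 : ℝ)}) ∩ (⋂ i, (fun t : ℝ × (Fin (m + 1) → ℝ) => t.2 i) ⁻¹' Set.Icc 0 ε) := by
      ext t; simp [hGdef, Set.mem_iInter]
    rw [this]
    exact (measurable_fst (measurableSet_singleton 1)).inter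
      (MeasurableSet.iInter fun i =>
        ((measurable_pi_apply i).comp measurable_snd) measurableSet_Icc)
  set S : Set ((ℝ × (Fin (m + 1) → ℝ)) × (Fin (m + 1) → ℝ)) :=
    {p | p.1 ∈ G ∧ p.2 + p.1.2 ∈ E} with hSdef
  have hSmeas : MeasurableSet S := by
    have : S = (Prod.fst ⁻¹' G) ∩ ((fun p : (ℝ × (Fin (m + 1) → ℝ)) × (Fin (m + 1) → ℝ) =>
        p.2 + p.1.2) ⁻¹' E) := by
      ext p; simp [hSdef]
    rw [this]
    exact (measurable_fst hGmeas).inter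
      ((measurable_snd.add (measurable_fst.snd)) hE)
  -- the preimage of S is contained in the target event
  have hsub : (fun ω => (T ω, X ω)) ⁻¹' S ⊆ {ω | X ω + Y ω ∈ E} ∩ B := by
    intro ω hω
    simp only [Set.mem_preimage, hSdef, Set.mem_setOf_eq, hGdef, hT] at hω
    obtain ⟨⟨hb, _⟩, hXE⟩ := hω
    have hωB : ω ∈ B := by
      by_contra hc
      rw [Set.indicator_of_notMem hc] at hb
      norm_num at hb
    exact ⟨hXE, hωB⟩
  have hTG : T ⁻¹' G = B ∩ {ω | ∀ i, Y ω i ∈ Set.Icc 0 ε} := by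
    ext ω
    simp only [Set.mem_preimage, hGdef, Set.mem_setOf_eq, hT, Set.mem_inter_iff]
    constructor
    · rintro ⟨hb, hy⟩
      refine ⟨?_, hy⟩
      by_contra hc
      rw [Set.indicator_of_notMem hc] at hb
      norm_num at hb
    · rintro ⟨hb, hy⟩
      exact ⟨Set.indicator_of_mem hb _, hy⟩
  have hmeasmk : Measurable (fun t : ℝ × (Fin (m + 1) → ℝ) => (P.map X) (Prod.mk t ⁻¹' S)) :=
    measurable_measure_prodMk_left hSmeas
  have key : ENNReal.ofReal ε * volume E * (P.map T) G ≤ ((P.map T).prod (P.map X)) S := by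
    rw [Measure.prod_apply hSmeas]
    calc ENNReal.ofReal ε * volume E * (P.map T) G
        = ∫⁻ _ in G, ENNReal.ofReal ε * volume E ∂(P.map T) := by
          rw [setLIntegral_const]
      _ ≤ ∫⁻ t in G, (P.map X) (Prod.mk t ⁻¹' S) ∂(P.map T) := by
          refine setLIntegral_mono' hGmeas ?_
          intro t ht
          have hpre : Prod.mk t ⁻¹' S = (fun x => x + t.2) ⁻¹' E := by
            ext x
            simp only [Set.mem_preimage, hSdef, Set.mem_setOf_eq]
            exact ⟨fun h => h.2, fun h => ⟨ht, h⟩⟩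
          rw [hpre]
          exact hXlow t.2 ht.2
      _ ≤ ∫⁻ t, (P.map X) (Prod.mk t ⁻¹' S) ∂(P.map T) := setLIntegral_le_lintegral _ _
  have hTGmeas : (P.map T) G = P (B ∩ {ω | ∀ i, Y ω i ∈ Set.Icc 0 ε}) := by
    rw [Measure.map_apply hTmeas hGmeas, hTG]
  have hfinal : ((P.map T).prod (P.map X)) S ≤ P ({ω | X ω + Y ω ∈ E} ∩ B) := by
    rw [← hmap, Measure.map_apply (hTmeas.prodMk hX) hSmeas]
    exact measure_mono hsub
  calc ENNReal.ofReal ε * volume E * P (B ∩ {ω | ∀ i, Y ω i ∈ Set.Icc 0 ε})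
      = ENNReal.ofReal ε * volume E * (P.map T) G := by rw [hTGmeas]
    _ ≤ ((P.map T).prod (P.map X)) S := key
    _ ≤ P ({ω | X ω + Y ω ∈ E} ∩ B) := hfinal
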